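/- Let D ≥ 2 and ℓ ≥ 1 be integers and let η ∈ [0,1] satisfy (D-1)(ℓ-1+η) > 1. Consider the polynomial p(x) = 1 - (D-1)(x + x² + ⋯ + x^{ℓ-1} + η x^{ℓ}). Then p has exactly one root x₁ in the real interval (0,1); this root satisfies x₁ > 1/D; x₁ is a simple root of p; and every other complex root z of p satisfies |z| > x₁. -/

import Mathlib

open Filter Topology


private lemma dtj_aux_eval (m : ℕ) (c η y : ℝ) :
    (1 - Polynomial.C c *
      ((∑ j ∈ Finset.Icc 1 m, Polynomial.X ^ j) + Polynomial.C η * Polynomial.X ^ (m+1))).eval y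
      = 1 - c * ((∑ j ∈ Finset.Icc 1 m, y^j) + η * y^(m+1)) := by
  simp [Polynomial.eval_finset_sum]

private lemma dtj_aux_deriv (m : ℕ) (c η y : ℝ) :
    (Polynomial.derivative (1 - Polynomial.C c *
      ((∑ j ∈ Finset.Icc 1 m, Polynomial.X ^ j) + Polynomial.C η * Polynomial.X ^ (m+1)))).eval y
      = -(c * ((∑ j ∈ Finset.Icc 1 m, (j:ℝ) * y^(j-1)) + η * (((m+1 : ℕ):ℝ) * y^m))) := by
  simp [Polynomial.derivative_sum, Polynomial.eval_finset_sum, Polynomial.derivative_X_pow]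

private lemma dtj_aux_aeval (m : ℕ) (c η : ℝ) (z : ℂ) :
    Polynomial.aeval z (1 - Polynomial.C c *
      ((∑ j ∈ Finset.Icc 1 m, Polynomial.X ^ j) + Polynomial.C η * Polynomial.X ^ (m+1)))
      = 1 - ((c:ℝ):ℂ) * ((∑ j ∈ Finset.Icc 1 m, z^j) + ((η:ℝ):ℂ) * z^(m+1)) := by
  simp [Polynomial.aeval_def, Polynomial.eval₂_finset_sum]

set_option maxHeartbeats 1000000 in
/-- Root analysis of the characteristic polynomial
`p(x) = 1 - (D-1)(x + x² + ⋯ + x^{ℓ-1} + η x^{ℓ})` of the linear recursion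
`R_k = (D-1)(Σ_{i=k-ℓ+1}^{k-1} R_i + η R_{k-ℓ})`:
`p` has exactly one root `x₁` in `(0,1)`, this root satisfies `x₁ > 1/D`, is a
simple root, and every other complex root has modulus strictly larger than `x₁`. -/
theorem decay_of_tails_jsq_stmt0
    (D ℓ : ℕ) (hD : 2 ≤ D) (hℓ : 1 ≤ ℓ) (η : ℝ) (hη : η ∈ Set.Icc (0:ℝ) 1)
    (hcond : ((D:ℝ) - 1) * ((ℓ:ℝ) - 1 + η) > 1)
    (p : Polynomial ℝ)
    (hp : p = 1 - Polynomial.C ((D:ℝ) - 1) *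
      ((∑ j ∈ Finset.Icc 1 (ℓ - 1), Polynomial.X ^ j) + Polynomial.C η * Polynomial.X ^ ℓ)) :
    ∃ x₁ ∈ Set.Ioo (0:ℝ) 1,
      p.eval x₁ = 0 ∧
      (∀ y ∈ Set.Ioo (0:ℝ) 1, p.eval y = 0 → y = x₁) ∧
      1 / (D:ℝ) < x₁ ∧
      Polynomial.rootMultiplicity x₁ p = 1 ∧
      ∀ z : ℂ, Polynomial.aeval z p = 0 → z ≠ (x₁ : ℂ) → (x₁ : ℝ) < ‖z‖ := by
  obtain ⟨hη0, hη1⟩ := hη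
  obtain ⟨m, rfl⟩ : ∃ m, ℓ = m + 1 := ⟨ℓ - 1, by omega⟩
  simp only [Nat.add_sub_cancel] at hp
  have hD2 : (2:ℝ) ≤ (D:ℝ) := by exact_mod_cast hD
  set A : ℝ := (D:ℝ) - 1 with hA_def
  have hA : (0:ℝ) < A := by simp only [hA_def]; linarith
  set s : ℝ → ℝ := fun y => (∑ j ∈ Finset.Icc 1 m, y^j) + η * y^(m+1) with hs
  have heval : ∀ y : ℝ, p.eval y = 1 - A * s y := by
    intro y; rw [hp, dtj_aux_eval]
  have hcond' : A * ((m:ℝ) + η) > 1 := by push_cast at hcond; linarith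
  have hkey : m = 0 → 0 < η := by
    intro h; subst h
    simp only [Nat.cast_zero, zero_add] at hcond'
    nlinarith
  clear_value A s
  have hmono : ∀ a b : ℝ, 0 ≤ a → a ≤ b → s a ≤ s b := by
    intro a b ha hab
    simp only [hs]
    have h1 : ∀ j : ℕ, a^j ≤ b^j := fun j => pow_le_pow_left₀ ha hab j
    have h2 : η * a^(m+1) ≤ η * b^(m+1) := mul_le_mul_of_nonneg_left (h1 _) hη0
    have h3 : ∑ j ∈ Finset.Icc 1 m, a^j ≤ ∑ j ∈ Finset.Icc 1 m, b^j :=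
      Finset.sum_le_sum fun i _ => h1 i
    linarith
  have hsmono : ∀ a b : ℝ, 0 ≤ a → a < b → s a < s b := by
    intro a b ha hab
    rcases Nat.eq_zero_or_pos m with hm|hm
    · subst hm
      have hη' := hkey rfl
      simp only [hs, Finset.Icc_self, zero_add, pow_one]
      have : Finset.Icc 1 0 = (∅ : Finset ℕ) := by decide
      rw [this]
      simp only [Finset.sum_empty, zero_add, pow_one]
      nlinarith
    · have h1 : ∑ j ∈ Finset.Icc 1 m, a^j < ∑ j ∈ Finset.Icc 1 m, b^j := by
        refine Finset.sum_lt_sum (fun i _ => pow_le_pow_left₀ ha hab.le i)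
          ⟨1, Finset.mem_Icc.mpr ⟨le_refl 1, hm⟩, by simpa using hab⟩
      have h2 : η * a^(m+1) ≤ η * b^(m+1) :=
        mul_le_mul_of_nonneg_left (pow_le_pow_left₀ ha hab.le _) hη0
      simp only [hs]; linarith
  have hf0 : p.eval 0 = 1 := by
    rw [heval]
    have : s 0 = 0 := by
      simp only [hs]
      rw [Finset.sum_eq_zero fun j hj => zero_pow (by have := (Finset.mem_Icc.mp hj).1; omega)]
      simp
    rw [this]; ring
  have hf1 : p.eval 1 < 0 := by
    rw [heval]
    have : s 1 = (m:ℝ) + η := by simp [hs]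
    rw [this]; linarith
  have h01 : (0:ℝ) ≤ 1 := by norm_num
  obtain ⟨x₁, hx₁mem, hx₁⟩ :=
    intermediate_value_Ioo' h01 (p.continuous).continuousOn
      (Set.mem_Ioo.mpr ⟨hf1, by rw [hf0]; norm_num⟩)
  replace hx₁ : p.eval x₁ = 0 := hx₁
  have hx₁0 : 0 < x₁ := hx₁mem.1
  have hsx₁ : A * s x₁ = 1 := by
    have := heval x₁; rw [hx₁] at this; linarith
  refine ⟨x₁, hx₁mem, hx₁, ?_, ?_, ?_, ?_⟩
  · -- uniqueness
    intro y hy hy0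
    have hsy : A * s y = 1 := by
      have := heval y; rw [hy0] at this; linarith
    have heqs : s y = s x₁ := mul_left_cancel₀ (ne_of_gt hA) (by linarith)
    rcases lt_trichotomy y x₁ with h|h|h
    · have := hsmono y x₁ hy.1.le h; linarith
    · exact h
    · have := hsmono x₁ y hx₁0.le h; linarith
  · -- 1/D < x₁
    have hDpos : (0:ℝ) < (D:ℝ) := by linarith
    have hr0 : (0:ℝ) < 1/(D:ℝ) := by positivity
    have hAr : A * (1/(D:ℝ)) = 1 - 1/(D:ℝ) := by
      have hD0 : (D:ℝ) ≠ 0 := by linarith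
      rw [hA_def]; field_simp
    have geo : ∀ n : ℕ, A * ∑ j ∈ Finset.Icc 1 n, (1/(D:ℝ))^j = 1 - (1/(D:ℝ))^n := by
      intro n; induction n with
      | zero => simp
      | succ k ih =>
        rw [Finset.sum_Icc_succ_top (by omega : 1 ≤ k+1)]
        have hx : A * (1/(D:ℝ))^(k+1) = (1 - 1/(D:ℝ)) * (1/(D:ℝ))^k := by
          rw [pow_succ]; linear_combination ((1/(D:ℝ))^k) * hAr
        rw [mul_add, ih, hx]; ring
    have hsr : A * s (1/(D:ℝ)) < 1 := by
      have h1 : s (1/(D:ℝ)) ≤ ∑ j ∈ Finset.Icc 1 (m+1), (1/(D:ℝ))^j := by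
        rw [Finset.sum_Icc_succ_top (by omega : 1 ≤ m+1)]
        simp only [hs]
        have : η * (1/(D:ℝ))^(m+1) ≤ (1/(D:ℝ))^(m+1) := by
          nlinarith [pow_pos hr0 (m+1)]
        linarith
      have h2 := geo (m+1)
      have h3 : (0:ℝ) < (1/(D:ℝ))^(m+1) := pow_pos hr0 _
      nlinarith
    by_contra hle
    push_neg at hle
    rcases eq_or_lt_of_le hle with h|h
    · rw [← h] at hsr; linarith
    · have h5 := hsmono x₁ (1/(D:ℝ)) hx₁0.le h
      have h6 := mul_lt_mul_of_pos_left h5 hA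
      linarith
  · -- root multiplicity
    have hpne : p ≠ 0 := by
      intro h; rw [h] at hf0; simp at hf0
    have hmpos : 0 < p.rootMultiplicity x₁ :=
      (Polynomial.rootMultiplicity_pos hpne).mpr hx₁
    have hder : (Polynomial.derivative p).eval x₁ ≠ 0 := by
      have hdeval : (Polynomial.derivative p).eval x₁
          = -(A * ((∑ j ∈ Finset.Icc 1 m, (j:ℝ) * x₁^(j-1)) + η * (((m+1 : ℕ):ℝ) * x₁^m))) := by
        rw [hp, dtj_aux_deriv]
      rw [hdeval]
      have hpos : 0 < (∑ j ∈ Finset.Icc 1 m, (j:ℝ) * x₁^(j-1)) + η * (((m+1 : ℕ):ℝ) * x₁^m) := by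
        rcases Nat.eq_zero_or_pos m with hm|hm
        · subst hm
          have hη' := hkey rfl
          have : Finset.Icc 1 0 = (∅ : Finset ℕ) := by decide
          rw [this]
          simp
          positivity
        · have h1 : ((1:ℕ):ℝ) * x₁^(1-1) ≤ ∑ j ∈ Finset.Icc 1 m, (j:ℝ) * x₁^(j-1) := by
            refine Finset.single_le_sum (f := fun j : ℕ => (j:ℝ) * x₁^(j-1)) (fun i _ => ?_)
              (Finset.mem_Icc.mpr ⟨le_refl 1, hm⟩)
            positivity
          simp only [Nat.cast_one, one_mul, Nat.sub_self, pow_zero] at h1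
          have h2 : 0 ≤ η * (((m+1:ℕ):ℝ) * x₁^m) := by positivity
          linarith
      nlinarith
    have hnot : ¬ (1 < p.rootMultiplicity x₁) := by
      rw [Polynomial.one_lt_rootMultiplicity_iff_isRoot hpne]
      rintro ⟨-, h2⟩; exact hder h2
    omega
  · -- complex roots
    intro z hz hne
    have h0 : Polynomial.aeval z p
        = 1 - ((A:ℝ):ℂ) * ((∑ j ∈ Finset.Icc 1 m, z^j) + ((η:ℝ):ℂ) * z^(m+1)) := by
      rw [hp, dtj_aux_aeval]
    rw [hz] at h0
    have hzeq : ((A:ℝ):ℂ) * ((∑ j ∈ Finset.Icc 1 m, z^j) + (η:ℂ) * z^(m+1)) = 1 := by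
      linear_combination h0
    have hR0 : 0 ≤ ‖z‖ := norm_nonneg z
    have habsS : ‖(∑ j ∈ Finset.Icc 1 m, z^j) + (η:ℂ) * z^(m+1)‖
        ≤ s (‖z‖) := by
      refine le_trans (norm_add_le _ _) ?_
      have h1 : ‖∑ j ∈ Finset.Icc 1 m, z^j‖
          ≤ ∑ j ∈ Finset.Icc 1 m, (‖z‖)^j :=
        le_trans (norm_sum_le _ _)
          (le_of_eq (Finset.sum_congr rfl fun j _ => by rw [norm_pow]))
      have h2 : ‖(η:ℂ) * z^(m+1)‖ = η * (‖z‖)^(m+1) := by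
        rw [norm_mul, norm_pow, Complex.norm_real, Real.norm_eq_abs, abs_of_nonneg hη0]
      simp only [hs]
      linarith
    have hge1 : (1:ℝ) ≤ A * s (‖z‖) := by
      have h3 := congrArg (‖·‖) hzeq
      rw [norm_mul, Complex.norm_real, Real.norm_eq_abs, abs_of_nonneg hA.le, norm_one] at h3
      have h4 := mul_le_mul_of_nonneg_left habsS hA.le
      linarith
    have hge : x₁ ≤ ‖z‖ := by
      by_contra h; push_neg at h
      have h5 := hsmono (‖z‖) x₁ hR0 h
      have h6 := mul_lt_mul_of_pos_left h5 hA
      linarith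
    rcases eq_or_lt_of_le hge with heq | h
    · -- |z| = x₁ : derive contradiction
      exfalso
      have hzx : ‖z‖ = x₁ := heq.symm
      have hre_lt : z.re < x₁ := by
        rcases eq_or_lt_of_le (Complex.re_le_norm z) with h1|h1
        · exfalso
          have him : z.im = 0 := by
            have hsq := Complex.sq_norm z
            rw [Complex.normSq_apply] at hsq
            nlinarith [sq_nonneg z.im]
          apply hne
          apply Complex.ext
          · simp only [Complex.ofReal_re]; rw [h1, hzx]
          · simp [him]
        · rw [← hzx]; exact h1
      have hterm : ∀ j : ℕ, (z^j).re ≤ x₁^j := fun j =>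
        le_trans (Complex.re_le_norm _) (le_of_eq (by rw [norm_pow, hzx]))
      have hreeq : A * ((∑ j ∈ Finset.Icc 1 m, (z^j).re) + η * (z^(m+1)).re) = 1 := by
        have h7 := congrArg Complex.re hzeq
        simpa [Complex.re_ofReal_mul, Complex.add_re, Complex.re_sum] using h7
      have hstrict : (∑ j ∈ Finset.Icc 1 m, (z^j).re) + η * (z^(m+1)).re < s x₁ := by
        rcases Nat.eq_zero_or_pos m with hm|hm
        · subst hm
          have hη' := hkey rfl
          have hhe : Finset.Icc 1 0 = (∅ : Finset ℕ) := by decide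
          simp only [hs, hhe, Finset.sum_empty, zero_add, zero_add, pow_one]
          exact mul_lt_mul_of_pos_left hre_lt hη'
        · have h1 : ∑ j ∈ Finset.Icc 1 m, (z^j).re < ∑ j ∈ Finset.Icc 1 m, x₁^j := by
            refine Finset.sum_lt_sum (fun i _ => hterm i)
              ⟨1, Finset.mem_Icc.mpr ⟨le_refl 1, hm⟩, ?_⟩
            simpa [pow_one] using hre_lt
          have h2 : η * (z^(m+1)).re ≤ η * x₁^(m+1) :=
            mul_le_mul_of_nonneg_left (hterm _) hη0
          simp only [hs]; linarith
      have h8 := mul_lt_mul_of_pos_left hstrict hA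
      linarith
    · exact h
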